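/- Let (X,d) be a metric space, θ=(k_r) a lacunary sequence, and f an unbounded modulus function that is θ-compatible. If a sequence (A_k) in CL(X) is Wijsman θ-lacunary strong Cesàro convergent to A ∈ CL(X), then (A_k) is Wijsman θ-lacunary f-strong Cesàro convergent to A. -/
import Mathlib


open Filter Metric Set

/-- `f : ℝ → ℝ` is an (unbounded) modulus function (considered on `[0,∞)`):
`f x = 0 ↔ x = 0`, subadditive, increasing, continuous from the right at `0`,
and unbounded. -/
def IsModulus (f : ℝ → ℝ) : Prop :=
  (∀ x ∈ Set.Ici (0:ℝ), 0 ≤ f x) ∧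
  (∀ x ∈ Set.Ici (0:ℝ), (f x = 0 ↔ x = 0)) ∧
  (∀ x ∈ Set.Ici (0:ℝ), ∀ y ∈ Set.Ici (0:ℝ), f (x + y) ≤ f x + f y) ∧
  MonotoneOn f (Set.Ici (0:ℝ)) ∧
  ContinuousWithinAt f (Set.Ici (0:ℝ)) 0 ∧
  (∀ M : ℝ, ∃ x ∈ Set.Ici (0:ℝ), M < f x)

/-- `φ(ε) = limsup_n f(nε)/f(n)`. -/
noncomputable def modPhi (f : ℝ → ℝ) (ε : ℝ) : ℝ :=
  Filter.limsup (fun n : ℕ => f ((n : ℝ) * ε) / f (n : ℝ)) Filter.atTop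

/-- A modulus function is compatible if `φ(ε) → 0` as `ε → 0⁺`. -/
def Compatible (f : ℝ → ℝ) : Prop :=
  Filter.Tendsto (modPhi f) (nhdsWithin 0 (Set.Ioi 0)) (nhds 0)

/-- Wijsman statistical convergence of a sequence of subsets of a metric space. -/
def WijsmanStatConv {X : Type*} [MetricSpace X] (A : ℕ → Set X) (B : Set X) : Prop :=
  ∀ x : X, ∀ ε > (0:ℝ),
    Filter.Tendsto (fun n : ℕ =>
      (((Finset.range n).filter
        (fun j => ε < |infDist x (A j) - infDist x B|)).card : ℝ) / (n : ℝ))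
      Filter.atTop (nhds 0)

/-- Wijsman `f`-statistical convergence of a sequence of subsets of a metric space. -/
def WijsmanFStatConv {X : Type*} [MetricSpace X] (f : ℝ → ℝ) (A : ℕ → Set X)
    (B : Set X) : Prop :=
  ∀ x : X, ∀ ε > (0:ℝ),
    Filter.Tendsto (fun n : ℕ =>
      f ((((Finset.range n).filter
        (fun j => ε < |infDist x (A j) - infDist x B|)).card : ℝ)) / f (n : ℝ))
      Filter.atTop (nhds 0)

/-- A real sequence is `f`-strong Cesàro convergent to `L`. -/
def FStrongCesaro (f : ℝ → ℝ) (x : ℕ → ℝ) (L : ℝ) : Prop :=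
  Filter.Tendsto (fun n : ℕ =>
    f (∑ j ∈ Finset.range n, |x j - L|) / f (n : ℝ)) Filter.atTop (nhds 0)

/-- Wijsman `f`-strong Cesàro convergence. -/
def WijsmanFStrongCesaro {X : Type*} [MetricSpace X] (f : ℝ → ℝ) (A : ℕ → Set X)
    (B : Set X) : Prop :=
  ∀ x : X, FStrongCesaro f (fun j => infDist x (A j)) (infDist x B)

/-- Wijsman strong Cesàro convergence (the case `f = id`). -/
def WijsmanStrongCesaro {X : Type*} [MetricSpace X] (A : ℕ → Set X) (B : Set X) : Prop :=
  ∀ x : X,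
    Filter.Tendsto (fun n : ℕ =>
      (∑ j ∈ Finset.range n, |infDist x (A j) - infDist x B|) / (n : ℝ))
      Filter.atTop (nhds 0)

/-- A real sequence is uniformly integrable. -/
def UnifIntegrable (x : ℕ → ℝ) : Prop :=
  Filter.Tendsto (fun c : ℝ =>
    ⨆ n : ℕ, (∑ j ∈ Finset.range n, if c ≤ |x j| then |x j| else 0) / (n : ℝ))
    Filter.atTop (nhds 0)

/-- Wijsman uniform integrability. -/
def WijsmanUnifIntegrable {X : Type*} [MetricSpace X] (A : ℕ → Set X) : Prop :=
  ∀ x : X, UnifIntegrable (fun j => infDist x (A j))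

/-- A lacunary sequence: strictly increasing, starting at `0`,
with gaps `h_r = k_{r+1} - k_r → ∞`. -/
def IsLacunary (k : ℕ → ℕ) : Prop :=
  k 0 = 0 ∧ StrictMono k ∧
    Filter.Tendsto (fun r : ℕ => k (r + 1) - k r) Filter.atTop Filter.atTop

/-- The gaps `h_r` of a lacunary sequence. -/
def lacH (k : ℕ → ℕ) (r : ℕ) : ℕ := k (r + 1) - k r

/-- The blocks `I_r = (k_r, k_{r+1}]` of a lacunary sequence. -/
def lacI (k : ℕ → ℕ) (r : ℕ) : Finset ℕ := Finset.Ioc (k r) (k (r + 1))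

/-- `φ_θ(ε) = limsup_t f(h_t ε)/f(h_t)`. -/
noncomputable def modPhiTheta (f : ℝ → ℝ) (k : ℕ → ℕ) (ε : ℝ) : ℝ :=
  Filter.limsup (fun t : ℕ => f ((lacH k t : ℝ) * ε) / f ((lacH k t : ℝ))) Filter.atTop

/-- `f` is `θ`-compatible if `φ_θ(ε) → 0` as `ε → 0⁺`. -/
def ThetaCompatible (f : ℝ → ℝ) (k : ℕ → ℕ) : Prop :=
  Filter.Tendsto (modPhiTheta f k) (nhdsWithin 0 (Set.Ioi 0)) (nhds 0)

/-- Wijsman `θ`-lacunary statistical convergence. -/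
def WijsmanLacStatConv {X : Type*} [MetricSpace X] (k : ℕ → ℕ) (A : ℕ → Set X)
    (B : Set X) : Prop :=
  ∀ x : X, ∀ ε > (0:ℝ),
    Filter.Tendsto (fun r : ℕ =>
      (((lacI k r).filter
        (fun j => ε < |infDist x (A j) - infDist x B|)).card : ℝ) / (lacH k r : ℝ))
      Filter.atTop (nhds 0)

/-- Wijsman `θ`-lacunary `f`-statistical convergence. -/
def WijsmanLacFStatConv {X : Type*} [MetricSpace X] (f : ℝ → ℝ) (k : ℕ → ℕ)
    (A : ℕ → Set X) (B : Set X) : Prop :=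
  ∀ x : X, ∀ ε > (0:ℝ),
    Filter.Tendsto (fun r : ℕ =>
      f ((((lacI k r).filter
        (fun j => ε < |infDist x (A j) - infDist x B|)).card : ℝ)) / f ((lacH k r : ℝ)))
      Filter.atTop (nhds 0)

/-- Wijsman `θ`-lacunary `f`-strong Cesàro convergence. -/
def WijsmanLacFStrongCesaro {X : Type*} [MetricSpace X] (f : ℝ → ℝ) (k : ℕ → ℕ)
    (A : ℕ → Set X) (B : Set X) : Prop :=
  ∀ x : X,
    Filter.Tendsto (fun r : ℕ =>
      f (∑ j ∈ lacI k r, |infDist x (A j) - infDist x B|) / f ((lacH k r : ℝ)))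
      Filter.atTop (nhds 0)

/-- Wijsman `θ`-lacunary strong Cesàro convergence (the case `f = id`). -/
def WijsmanLacStrongCesaro {X : Type*} [MetricSpace X] (k : ℕ → ℕ)
    (A : ℕ → Set X) (B : Set X) : Prop :=
  ∀ x : X,
    Filter.Tendsto (fun r : ℕ =>
      (∑ j ∈ lacI k r, |infDist x (A j) - infDist x B|) / (lacH k r : ℝ))
      Filter.atTop (nhds 0)

/-- A real sequence is `θ`-lacunary uniformly integrable. -/
def LacUnifIntegrable (k : ℕ → ℕ) (x : ℕ → ℝ) : Prop :=
  Filter.Tendsto (fun M : ℝ =>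
    ⨆ t : ℕ, (∑ j ∈ lacI k t, if M ≤ |x j| then |x j| else 0) / (lacH k t : ℝ))
    Filter.atTop (nhds 0)

/-- Wijsman `θ`-lacunary uniform integrability. -/
def WijsmanLacUnifIntegrable {X : Type*} [MetricSpace X] (k : ℕ → ℕ)
    (A : ℕ → Set X) : Prop :=
  ∀ x : X, LacUnifIntegrable k (fun j => infDist x (A j))


theorem wijsman_lac_cesaro_imp_lac_fcesaro_of_thetaCompatible {X : Type*}
    [MetricSpace X] (k : ℕ → ℕ) (hk : IsLacunary k)
    (f : ℝ → ℝ) (hf : IsModulus f) (hfc : ThetaCompatible f k)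
    (A : ℕ → Set X) (B : Set X)
    (hA : ∀ n, (A n).Nonempty ∧ IsClosed (A n)) (hB : B.Nonempty ∧ IsClosed B)
    (h : WijsmanLacStrongCesaro k A B) : WijsmanLacFStrongCesaro f k A B := by
  intro x
  obtain ⟨hnn, hiff, _hsub, hmono, _hcont, _hub⟩ := hf
  have fpos : ∀ y : ℝ, 0 < y → 0 < f y := by
    intro y hy
    refine lt_of_le_of_ne (hnn y hy.le) fun h0 => hy.ne' ?_
    exact (hiff y hy.le).mp h0.symm
  rw [NormedAddCommGroup.tendsto_nhds_zero]
  intro δ hδ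
  -- choose ε from θ-compatibility
  have h1 : ∀ᶠ ε in nhdsWithin (0:ℝ) (Set.Ioi 0), modPhiTheta f k ε < δ :=
    hfc (gt_mem_nhds hδ)
  have h2 : ∀ᶠ ε in nhdsWithin (0:ℝ) (Set.Ioi 0), ε < 1 :=
    eventually_nhdsWithin_of_eventually_nhds (tendsto_id.eventually_lt_const zero_lt_one)
  have h3 : ∀ᶠ ε in nhdsWithin (0:ℝ) (Set.Ioi 0), ε ∈ Set.Ioi (0:ℝ) :=
    eventually_mem_nhdsWithin
  obtain ⟨ε, ⟨hφ, hε1⟩, hε0⟩ := ((h1.and h2).and h3).exists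
  -- the quotient sequence is bounded above by 1
  have hbdd : Filter.IsBoundedUnder (· ≤ ·) Filter.atTop
      (fun t : ℕ => f ((lacH k t : ℝ) * ε) / f ((lacH k t : ℝ))) := by
    refine Filter.isBoundedUnder_of ⟨1, fun t => ?_⟩
    have hm : (0:ℝ) ≤ (lacH k t : ℝ) := Nat.cast_nonneg _
    have hle : (lacH k t : ℝ) * ε ≤ (lacH k t : ℝ) :=
      mul_le_of_le_one_right hm hε1.le
    rcases hm.eq_or_lt with hm0 | hm0
    · have hf0 : f 0 = 0 := (hiff 0 Set.self_mem_Ici).mpr rfl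
      simp [← hm0, hf0]
    · have : f ((lacH k t : ℝ) * ε) ≤ f ((lacH k t : ℝ)) :=
        hmono (Set.mem_Ici.2 (mul_nonneg hm hε0.le)) (Set.mem_Ici.2 hm) hle
      exact div_le_one_of_le₀ this (hnn _ hm)
  have hev1 : ∀ᶠ t : ℕ in Filter.atTop,
      f ((lacH k t : ℝ) * ε) / f ((lacH k t : ℝ)) < δ := by
    have hφ' : Filter.limsup
        (fun t : ℕ => f ((lacH k t : ℝ) * ε) / f ((lacH k t : ℝ))) Filter.atTop < δ := hφ
    exact Filter.eventually_lt_of_limsup_lt hφ' hbdd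
  have hev2 : ∀ᶠ r : ℕ in Filter.atTop, 1 ≤ lacH k r := hk.2.2.eventually_ge_atTop 1
  have hev3 : ∀ᶠ r : ℕ in Filter.atTop,
      ‖(∑ j ∈ lacI k r, |infDist x (A j) - infDist x B|) / (lacH k r : ℝ)‖ < ε := by
    have := h x
    rw [NormedAddCommGroup.tendsto_nhds_zero] at this
    exact this ε hε0
  filter_upwards [hev1, hev2, hev3] with r hr1 hr2 hr3
  set S : ℝ := ∑ j ∈ lacI k r, |infDist x (A j) - infDist x B| with hS
  have hSnn : 0 ≤ S := Finset.sum_nonneg fun _ _ => abs_nonneg _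
  have hm1 : (1:ℝ) ≤ (lacH k r : ℝ) := by exact_mod_cast hr2
  have hm0 : (0:ℝ) < (lacH k r : ℝ) := lt_of_lt_of_le zero_lt_one hm1
  have hSm : S < ε * (lacH k r : ℝ) := by
    have : S / (lacH k r : ℝ) < ε := by
      have := hr3
      rwa [Real.norm_eq_abs, abs_of_nonneg (div_nonneg hSnn hm0.le)] at this
    exact (div_lt_iff₀ hm0).mp this
  have hfS : f S ≤ f ((lacH k r : ℝ) * ε) :=
    hmono (Set.mem_Ici.2 hSnn) (Set.mem_Ici.2 (mul_nonneg hm0.le hε0.le))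
      (by rw [mul_comm]; exact hSm.le)
  have hfm : 0 < f ((lacH k r : ℝ)) := fpos _ hm0
  have hquot : f S / f ((lacH k r : ℝ)) ≤ f ((lacH k r : ℝ) * ε) / f ((lacH k r : ℝ)) :=
    div_le_div_of_nonneg_right hfS hfm.le
  have hfin : f S / f ((lacH k r : ℝ)) < δ := lt_of_le_of_lt hquot hr1
  rwa [Real.norm_eq_abs, abs_of_nonneg (div_nonneg (hnn S hSnn) hfm.le)]
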